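/- Let (I, ≤) be an upward directed poset, (Mᵢ, f_{ji}) a cofiltered diagram of finite L-structures over I, and U a directed ultrafilter on I, with γ_{I,i} : ∏_{j∈I} Mⱼ → Mᵢ sending x to the unique y with V_{I,i}(x, y) ∈ U. Then: (a) γ_{I,i} descends to the ultraproduct, i.e., if x, x′ ∈ ∏_{j∈I} Mⱼ satisfy {j ∈ I : x(j) = x′(j)} ∈ U then γ_{I,i}(x) = γ_{I,i}(x′), so there is an induced L-homomorphism γᵢ : (∏_{j∈I} Mⱼ)/U → Mᵢ with γᵢ(x/U) = γ_{I,i}(x); and (b) for all i ≤ k in I, f_{ki} ∘ γ_k = γᵢ. -/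

import Mathlib

open FirstOrder Language

universe u v w

namespace CofilteredDiagram

variable {L : FirstOrder.Language.{u, v}} {I : Type w} [PartialOrder I]

/-- For a cofiltered diagram `(Mᵢ, f)` of `L`-structures over `I` (with transition maps
`f i j hij : M j →[L] M i` for `i ≤ j`), a subset `J ⊆ I`, an index `i`, a point
`x ∈ ∏_{j ∈ J} Mⱼ` and `y ∈ Mᵢ`, the set `V_{J,i}(x, y) = {j ∈ J ∩ ↑i : f_{ji}(x j) = y}`. -/
def V (M : I → Type*) [∀ i, L.Structure (M i)] (f : ∀ i j : I, i ≤ j → (M j →[L] M i))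
    (J : Set I) (i : I) (x : ∀ j : J, M j) (y : M i) : Set I :=
  {j : I | ∃ (hj : j ∈ J) (hij : i ≤ j), f i j hij (x ⟨j, hj⟩) = y}

end CofilteredDiagram

open CofilteredDiagram

open Filter

/-- For a cofiltered diagram of finite `L`-structures over an upward directed poset `I` and a
directed ultrafilter `U` on `I`, with `γ_{I,i} : ∏_{j ∈ I} Mⱼ → Mᵢ` sending `x` to the unique `y`
with `V_{I,i}(x, y) ∈ U`: (a) `γ_{I,i}` descends to the ultraproduct, inducing an
`L`-homomorphism `γᵢ : (∏ⱼ Mⱼ)/U → Mᵢ` with `γᵢ(x/U) = γ_{I,i}(x)`; and (b) for `i ≤ k`,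
`f_{ki} ∘ γ_k = γᵢ`. -/
theorem gamma_descends_to_ultraproduct {L : FirstOrder.Language.{u, v}} {I : Type w}
    [PartialOrder I] [Nonempty I] (hdir : ∀ i j : I, ∃ k : I, i ≤ k ∧ j ≤ k)
    (M : I → Type*) [∀ i, L.Structure (M i)] [∀ i, Finite (M i)]
    (f : ∀ i j : I, i ≤ j → (M j →[L] M i))
    (hfid : ∀ (i : I) (h : i ≤ i), f i i h = Hom.id L (M i))
    (hfcomp : ∀ (i j k : I) (hij : i ≤ j) (hjk : j ≤ k),
      (f i j hij).comp (f j k hjk) = f i k (le_trans hij hjk))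
    (U : Ultrafilter I) (hU : ∀ i : I, {j : I | i ≤ j} ∈ U)
    (γ : ∀ i : I, (∀ j, M j) → M i)
    (hγ : ∀ (i : I) (x : ∀ j, M j) (y : M i),
      γ i x = y ↔ V M f Set.univ i (fun j => x j.1) y ∈ U) :
    -- (a) `γ_{I,i}` descends to the ultraproduct ...
    (∀ (i : I) (x x' : ∀ j, M j), {j : I | x j = x' j} ∈ U → γ i x = γ i x') ∧
    -- ... inducing an `L`-homomorphism `γᵢ` on the ultraproduct
    (∀ i : I, ∃ g : ((U : Filter I).Product M) →[L] M i,
      ∀ x : ∀ j, M j, g (x : (U : Filter I).Product M) = γ i x) ∧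
    -- (b) `f_{ki} ∘ γ_k = γᵢ` for `i ≤ k`
    (∀ (i k : I) (hik : i ≤ k) (x : ∀ j, M j), f i k hik (γ k x) = γ i x) := by
  classical
  -- basic membership fact
  have hmem : ∀ (i : I) (x : ∀ j, M j),
      V M f Set.univ i (fun j => x j.1) (γ i x) ∈ U := fun i x => (hγ i x _).1 rfl
  -- (a) descent
  have ha : ∀ (i : I) (x x' : ∀ j, M j), {j : I | x j = x' j} ∈ U → γ i x = γ i x' := by
    intro i x x' hxx'
    refine ((hγ i x' (γ i x)).2 ?_).symm
    refine Filter.mem_of_superset (Filter.inter_mem (hmem i x) hxx') ?_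
    rintro j ⟨⟨hj, hij, hfj⟩, hx⟩
    refine ⟨trivial, hij, ?_⟩
    show f i j hij (x' j) = γ i x
    rw [← show x j = x' j from hx]
    exact hfj
  -- (c) compatibility with transition maps
  have hc : ∀ (i k : I) (hik : i ≤ k) (x : ∀ j, M j), f i k hik (γ k x) = γ i x := by
    intro i k hik x
    refine ((hγ i x (f i k hik (γ k x))).2 ?_).symm
    refine Filter.mem_of_superset (hmem k x) ?_
    rintro j ⟨hj, hkj, hfj⟩
    refine ⟨trivial, le_trans hik hkj, ?_⟩
    rw [← hfj]
    exact congrFun (congrArg Hom.toFun (hfcomp i k j hik hkj).symm) (x j)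
  refine ⟨ha, ?_, hc⟩
  -- (b) the induced homomorphism on the ultraproduct
  intro i
  have hfun : ∀ {n : ℕ} (F : L.Functions n) (y : Fin n → ∀ j, M j),
      γ i (fun j => Structure.funMap F fun a => y a j) =
        Structure.funMap F fun a => γ i (y a) := by
    intro n F y
    refine (hγ i _ _).2 ?_
    have hbig : ({j : I | i ≤ j} ∩ ⋂ a : Fin n,
        V M f Set.univ i (fun j => y a j.1) (γ i (y a))) ∈ U :=
      Filter.inter_mem (hU i) (Filter.iInter_mem.2 fun a => hmem i (y a))
    refine Filter.mem_of_superset hbig ?_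
    rintro j ⟨hij, hall⟩
    simp only [Set.mem_iInter] at hall
    refine ⟨trivial, hij, ?_⟩
    rw [(f i j hij).map_fun]
    congr 1
    funext a
    obtain ⟨_, hij', hfj⟩ := hall a
    exact hfj
  have hrel : ∀ {n : ℕ} (R : L.Relations n) (y : Fin n → ∀ j, M j),
      (∀ᶠ j in (U : Filter I), Structure.RelMap R fun a => y a j) →
        Structure.RelMap R fun a => γ i (y a) := by
    intro n R y hy
    have hbig : ({j : I | Structure.RelMap R fun a => y a j} ∩ ({j : I | i ≤ j} ∩
        ⋂ a : Fin n, V M f Set.univ i (fun j => y a j.1) (γ i (y a)))) ∈ U :=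
      Filter.inter_mem hy (Filter.inter_mem (hU i) (Filter.iInter_mem.2 fun a => hmem i (y a)))
    obtain ⟨j, hjR, hij, hall⟩ := Ultrafilter.nonempty_of_mem hbig
    simp only [Set.mem_iInter] at hall
    have hR := (f i j hij).map_rel R (fun a => y a j) hjR
    have hcomp : ((f i j hij) ∘ fun a => y a j) = fun a => γ i (y a) := by
      funext a
      obtain ⟨_, hij', hfj⟩ := hall a
      exact hfj
    rwa [hcomp] at hR
  refine ⟨⟨fun q => Quotient.liftOn' q (γ i) (fun x x' h => ha i x x' h), ?_, ?_⟩, fun x => rfl⟩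
  · intro n F x
    obtain ⟨y, rfl⟩ : ∃ y : Fin n → ∀ j, M j,
        (fun a => (y a : (U : Filter I).Product M)) = x :=
      ⟨fun a => Quotient.out (x a), funext fun a => Quotient.out_eq' (x a)⟩
    exact (congrArg (fun q : (U : Filter I).Product M => Quotient.liftOn' q (γ i)
      (fun x x' h => ha i x x' h)) (Ultraproduct.funMap_cast F y)).trans (hfun F y)
  · intro n R x hx
    obtain ⟨y, rfl⟩ : ∃ y : Fin n → ∀ j, M j,
        (fun a => (y a : (U : Filter I).Product M)) = x :=
      ⟨fun a => Quotient.out (x a), funext fun a => Quotient.out_eq' (x a)⟩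
    exact hrel R y ((relMap_quotient_mk' ((U : Filter I).productSetoid M) R y).mp hx)
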